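/- The frequency (density) of the letter 0 in p equals 1/β₁², i.e., the number of 0's in the prefix of length N of p, divided by N, tends to 1/β₁² as N → ∞, where β₁ is the real root of X³ - 2X² + X - 1. -/

import Mathlib

set_option maxHeartbeats 1000000

/-- The morphism h : 0 → 01, 1 → 21, 2 → 0. -/
def h : ℕ → List ℕ
  | 0 => [0, 1]
  | 1 => [2, 1]
  | _ => [0]

/-- Apply the morphism h to a finite word. -/
def hword (w : List ℕ) : List ℕ := (w.map h).flatten

/-- `p : ℕ → ℕ` is the infinite fixed point of h starting with 0:
it takes values in {0,1,2}, starts with 0, and for every n the word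
h(p 0) h(p 1) ⋯ h(p (n-1)) is a prefix of p. -/
def IsFixedPoint (p : ℕ → ℕ) : Prop :=
  (∀ n, p n < 3) ∧ p 0 = 0 ∧
  ∀ n k, k < (hword ((List.range n).map p)).length →
    (hword ((List.range n).map p)).getD k 0 = p k

/-- `w` is a (contiguous) factor of the infinite word `p`. -/
def IsFactor (w : List ℕ) (p : ℕ → ℕ) : Prop :=
  ∃ i : ℕ, w = (List.range w.length).map fun j => p (i + j)

/-! ### Auxiliary definitions and combinatorial lemmas -/

def cnt (p : ℕ → ℕ) (a N : ℕ) : ℕ := ((List.range N).map p).count a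
def LL (p : ℕ → ℕ) (n : ℕ) : ℕ := (hword ((List.range n).map p)).length

lemma hword_cons (a : ℕ) (w : List ℕ) : hword (a :: w) = h a ++ hword w := by
  simp [hword]

lemma hword_counts (w : List ℕ) (hw : ∀ a ∈ w, a < 3) :
    (hword w).count 0 = w.count 0 + w.count 2 ∧
    (hword w).count 1 = w.count 0 + w.count 1 ∧
    (hword w).count 2 = w.count 1 ∧
    (hword w).length = 2 * w.count 0 + 2 * w.count 1 + w.count 2 := by
  induction w with
  | nil => simp [hword]
  | cons a w ih =>
    have ha : a < 3 := hw a List.mem_cons_self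
    obtain ⟨i1, i2, i3, i4⟩ := ih (fun b hb => hw b (List.mem_cons_of_mem a hb))
    interval_cases a <;>
      simp [hword_cons, h, List.count_append, List.count_cons, i1, i2, i3, i4] <;> omega

lemma count_sum (w : List ℕ) (hw : ∀ a ∈ w, a < 3) :
    w.count 0 + w.count 1 + w.count 2 = w.length := by
  induction w with
  | nil => simp
  | cons a w ih =>
    have ha : a < 3 := hw a List.mem_cons_self
    have ih' := ih (fun b hb => hw b (List.mem_cons_of_mem a hb))
    interval_cases a <;> simp [List.count_cons] <;> omega

lemma pre_L (p : ℕ → ℕ) (hp : IsFixedPoint p) (n : ℕ) :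
    (List.range (LL p n)).map p = hword ((List.range n).map p) := by
  apply List.ext_getElem
  · simp [LL]
  · intro i h1 h2
    have hfix := hp.2.2 n i (by simpa [LL] using h2)
    have : (hword ((List.range n).map p)).getD i 0 = (hword ((List.range n).map p))[i] :=
      List.getD_eq_getElem _ _ h2
    rw [this] at hfix
    simp [← hfix]

lemma range_succ_map (p : ℕ → ℕ) (n : ℕ) :
    (List.range (n+1)).map p = (List.range n).map p ++ [p n] := by
  simp [List.range_succ]

lemma cnt_succ (p : ℕ → ℕ) (a N : ℕ) :
    cnt p a (N+1) = cnt p a N + if p N = a then 1 else 0 := by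
  simp [cnt, range_succ_map, List.count_append, List.count_singleton]

lemma pre_lt3 (p : ℕ → ℕ) (hp : IsFixedPoint p) (N : ℕ) :
    ∀ a ∈ (List.range N).map p, a < 3 := by
  intro a ha
  simp only [List.mem_map] at ha
  obtain ⟨i, _, rfl⟩ := ha
  exact hp.1 i

lemma cnt_sum (p : ℕ → ℕ) (hp : IsFixedPoint p) (N : ℕ) :
    cnt p 0 N + cnt p 1 N + cnt p 2 N = N := by
  have := count_sum _ (pre_lt3 p hp N)
  simpa [cnt] using this

lemma cnt_LL0 (p : ℕ → ℕ) (hp : IsFixedPoint p) (n : ℕ) :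
    cnt p 0 (LL p n) = cnt p 0 n + cnt p 2 n := by
  have := (hword_counts _ (pre_lt3 p hp n)).1
  simpa [cnt, pre_L p hp n] using this

lemma cnt_LL1 (p : ℕ → ℕ) (hp : IsFixedPoint p) (n : ℕ) :
    cnt p 1 (LL p n) = cnt p 0 n + cnt p 1 n := by
  have := (hword_counts _ (pre_lt3 p hp n)).2.1
  simpa [cnt, pre_L p hp n] using this

lemma LL_eq (p : ℕ → ℕ) (hp : IsFixedPoint p) (n : ℕ) :
    LL p n = n + cnt p 0 n + cnt p 1 n := by
  have h4 := (hword_counts _ (pre_lt3 p hp n)).2.2.2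
  have h5 := count_sum _ (pre_lt3 p hp n)
  simp only [LL, cnt] at *
  simp at h5
  omega

lemma cnt_mono (p : ℕ → ℕ) (a : ℕ) : Monotone (cnt p a) := by
  apply monotone_nat_of_le_succ
  intro n
  rw [cnt_succ]
  split <;> omega

lemma cnt_le (p : ℕ → ℕ) (a N : ℕ) : cnt p a N ≤ N := by
  have := (List.count_le_length : List.count a ((List.range N).map p) ≤ _)
  simpa [cnt] using this

lemma cnt0_pos (p : ℕ → ℕ) (hp : IsFixedPoint p) (n : ℕ) (hn : 1 ≤ n) :
    1 ≤ cnt p 0 n := by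
  have h1 : cnt p 0 1 = 1 := by simp [cnt, List.range_succ, hp.2.1]
  calc 1 = cnt p 0 1 := h1.symm
  _ ≤ cnt p 0 n := cnt_mono p 0 hn

lemma LL_ge (p : ℕ → ℕ) (hp : IsFixedPoint p) (n : ℕ) (hn : 1 ≤ n) :
    n + 1 ≤ LL p n := by
  have := cnt0_pos p hp n hn
  rw [LL_eq p hp n]; omega

lemma LL_succ (p : ℕ → ℕ) (hp : IsFixedPoint p) (n : ℕ) :
    LL p n + 1 ≤ LL p (n+1) ∧ LL p (n+1) ≤ LL p n + 2 := by
  have : LL p (n+1) = LL p n + (h (p n)).length := by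
    simp [LL, range_succ_map, hword, List.map_append]
  rw [this]
  have hpn := hp.1 n
  interval_cases hh : p n <;> simp [h]

lemma LL_one (p : ℕ → ℕ) (hp : IsFixedPoint p) : LL p 1 = 2 := by
  simp [LL, hword, List.range_succ, hp.2.1, h]

lemma exists_wit (p : ℕ → ℕ) (hp : IsFixedPoint p) :
    ∀ N, 2 ≤ N → ∃ n, 1 ≤ n ∧ n < N ∧ (N = LL p n ∨ N = LL p n + 1) := by
  intro N hN
  induction N with
  | zero => omega
  | succ N ih =>
    rcases Nat.lt_or_ge N 2 with hN2 | hN2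
    · have : N = 1 := by omega
      subst this
      exact ⟨1, le_refl 1, by omega, Or.inl (LL_one p hp).symm⟩
    · obtain ⟨n, hn1, hn2, hn3⟩ := ih hN2
      rcases hn3 with h1 | h1
      · exact ⟨n, hn1, by omega, Or.inr (by omega)⟩
      · rcases (LL_succ p hp n) with ⟨hs1, hs2⟩
        rcases Nat.lt_or_ge (LL p (n+1)) (N+1) with hc | hc
        · exact ⟨n+1, by omega, by omega, Or.inr (by omega)⟩
        · have : LL p (n+1) = N + 1 := by omega
          exact ⟨n+1, by omega, by omega, Or.inl this.symm⟩

/-! ### Algebraic lemmas -/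

lemma algebra1 (β u0 u1 A B C n : ℝ)
    (h2' : u0*(β-1) = 2-β) (hs : u0 + u1 = β-1) (hsum : A + B + C = n) :
    (A + C) - u0*(n + A + B) = -(B - u1*n) - u0*((A - u0*n) + (B - u1*n)) := by
  linear_combination hsum - n*h2' - n*(1+u0)*hs

lemma algebra2 (β u0 u1 A B n : ℝ)
    (h3' : u1*(β-1) = u0) (hs : u0 + u1 = β-1) :
    (A + B) - u1*(n + A + B) = (1-u1)*((A - u0*n) + (B - u1*n)) := by
  linear_combination (-n)*h3' - n*u1*hs

lemma linbound (c d x y e M : ℝ) (hx : |x| ≤ M) (hy : |y| ≤ M) :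
    |c*x + d*y + e| ≤ (|c| + |d|) * M + |e| := by
  have h1 : |c*x| ≤ |c| * M := by
    rw [abs_mul]; exact mul_le_mul_of_nonneg_left hx (abs_nonneg c)
  have h2 : |d*y| ≤ |d| * M := by
    rw [abs_mul]; exact mul_le_mul_of_nonneg_left hy (abs_nonneg d)
  calc |c*x + d*y + e| ≤ |c*x + d*y| + |e| := abs_add_le _ _
    _ ≤ |c*x| + |d*y| + |e| := by linarith [abs_add_le (c*x) (d*y)]
    _ ≤ (|c| + |d|) * M + |e| := by linarith

lemma err1 (u0 e1 f1 e2 : ℝ) (hu0pos : 0 < u0) (hu0b : u0 ≤ 0.3248)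
    (he1a : -1 ≤ e1) (he1b : e1 ≤ 1) (hf1a : -1 ≤ f1) (hf1b : f1 ≤ 1)
    (he2a : -1 ≤ e2) (he2b : e2 ≤ 1) :
    |e2 - f1 - u0*(e1+f1)| ≤ 2.65 := by
  rw [abs_le]
  constructor <;> nlinarith [mul_nonneg hu0pos.le (by linarith : (0:ℝ) ≤ e1+f1+2),
    mul_nonneg hu0pos.le (by linarith : (0:ℝ) ≤ 2-(e1+f1))]

lemma err2 (u1 e1 f1 f2 : ℝ) (hu1a : 0.43 ≤ u1) (hu1b : u1 ≤ 0.4302)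
    (he1a : -1 ≤ e1) (he1b : e1 ≤ 1) (hf1a : -1 ≤ f1) (hf1b : f1 ≤ 1)
    (hf2a : -1 ≤ f2) (hf2b : f2 ≤ 1) :
    |(1-u1)*(e1+f1) + f2| ≤ 2.2 := by
  rw [abs_le]
  constructor <;> nlinarith [mul_nonneg (by linarith : (0:ℝ) ≤ 1-u1) (by linarith : (0:ℝ) ≤ e1+f1+2),
    mul_nonneg (by linarith : (0:ℝ) ≤ 1-u1) (by linarith : (0:ℝ) ≤ 2-(e1+f1))]

lemma key (β u0 u1 x y x1 y1 x2 y2 e1 f1 e2 f2 : ℝ)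
    (hb1 : 1.7548 < β) (hb2 : β < 1.7549)
    (hu0 : u0 * β^2 = 1) (hu1 : u1 = β - 1 - u0)
    (h1 : x1 = -y - u0*(x+y) + e1) (h2 : y1 = (1-u1)*(x+y) + f1)
    (h3 : x2 = -y1 - u0*(x1+y1) + e2) (h4 : y2 = (1-u1)*(x1+y1) + f2)
    (he1 : |e1| ≤ 1) (hf1 : |f1| ≤ 1) (he2 : |e2| ≤ 1) (hf2 : |f2| ≤ 1)
    (hx : |x| ≤ 200) (hy : |y| ≤ 200) : |x2| ≤ 200 ∧ |y2| ≤ 200 := by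
  have hu0pos : 0 < u0 := by nlinarith
  have hu0a : 0.3247 ≤ u0 := by nlinarith
  have hu0b : u0 ≤ 0.3248 := by nlinarith
  have hu1a : 0.43 ≤ u1 := by rw [hu1]; linarith
  have hu1b : u1 ≤ 0.4302 := by rw [hu1]; linarith
  obtain ⟨he1a, he1b⟩ := abs_le.mp he1
  obtain ⟨hf1a, hf1b⟩ := abs_le.mp hf1
  obtain ⟨he2a, he2b⟩ := abs_le.mp he2
  obtain ⟨hf2a, hf2b⟩ := abs_le.mp hf2
  have m1 : (0:ℝ) ≤ (1-u1-0.5698)*(u0-0.3247) := mul_nonneg (by linarith) (by linarith)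
  have m2 : (0:ℝ) ≤ (0.57-(1-u1))*(0.3248-u0) := mul_nonneg (by linarith) (by linarith)
  have m3 : (0:ℝ) ≤ (1-u1-0.5698)*(0.3248-u0) := mul_nonneg (by linarith) (by linarith)
  have m4 : (0:ℝ) ≤ (0.57-(1-u1))*(u0-0.3247) := mul_nonneg (by linarith) (by linarith)
  have m5 : (0:ℝ) ≤ (0.3248-u0)*(u0-0.3247) := mul_nonneg (by linarith) (by linarith)
  have hP1 : 0.754814 ≤ (1-u1)*(1+u0) := by nlinarith [m1]
  have hP2 : (1-u1)*(1+u0) ≤ 0.755136 := by nlinarith [m2]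
  have hsq1 : 0.10543 ≤ u0^2 := by nlinarith [m5]
  have hsq2 : u0^2 ≤ 0.1055 := by nlinarith [m5]
  have hQ1 : 0.1396 ≤ (1-u1)*(1-u0-u1) := by nlinarith [m1, m3]
  have hQ2 : (1-u1)*(1-u0-u1) ≤ 0.14 := by nlinarith [m2, m4]
  have hK1 : 0.43 ≤ (1-u1)*(u0+u1) := by nlinarith [m1, m4]
  have hK2 : (1-u1)*(u0+u1) ≤ 0.4304 := by nlinarith [m2, m3]
  constructor
  · have hx2 : x2 = (u0^2 - (1-u1)*(1+u0))*x + (u0^2 - (1-u1)*(1+u0) + u0)*y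
        + (e2 - f1 - u0*(e1+f1)) := by rw [h3, h2, h1]; ring
    have hc : |u0^2 - (1-u1)*(1+u0)| ≤ 0.6498 := by
      rw [abs_le]; constructor <;> linarith
    have hd : |u0^2 - (1-u1)*(1+u0) + u0| ≤ 0.3251 := by
      rw [abs_le]; constructor <;> linarith
    have herr := err1 u0 e1 f1 e2 hu0pos hu0b he1a he1b hf1a hf1b he2a he2b
    rw [hx2]
    calc _ ≤ (|u0^2 - (1-u1)*(1+u0)| + |u0^2 - (1-u1)*(1+u0) + u0|) * 200
        + |e2 - f1 - u0*(e1+f1)| := linbound _ _ _ _ _ _ hx hy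
      _ ≤ 200 := by linarith
  · have hy2 : y2 = ((1-u1)*(1-u0-u1))*x + (-((1-u1)*(u0+u1)))*y
        + ((1-u1)*(e1+f1) + f2) := by rw [h4, h2, h1]; ring
    have hc : |(1-u1)*(1-u0-u1)| ≤ 0.14 := by
      rw [abs_le]; constructor <;> linarith
    have hd : |(-((1-u1)*(u0+u1)))| ≤ 0.4304 := by
      rw [abs_neg, abs_le]; constructor <;> linarith
    have herr := err2 u1 e1 f1 f2 hu1a hu1b he1a he1b hf1a hf1b hf2a hf2b
    rw [hy2]
    calc _ ≤ (|(1-u1)*(1-u0-u1)| + |(-((1-u1)*(u0+u1)))|) * 200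
        + |(1-u1)*(e1+f1) + f2| := linbound _ _ _ _ _ _ hx hy
      _ ≤ 200 := by linarith

/-! ### Main theorem -/

theorem stmt13 (p : ℕ → ℕ) (hp : IsFixedPoint p) (β₁ : ℝ)
    (hroot : β₁^3 - 2*β₁^2 + β₁ - 1 = 0)
    (huniq : ∀ x : ℝ, x^3 - 2*x^2 + x - 1 = 0 → x = β₁) :
    Filter.Tendsto
      (fun N : ℕ => (((List.range N).map p).count 0 : ℝ) / N)
      Filter.atTop (nhds (1 / β₁^2)) := by
  have hb1 : (1.7548:ℝ) < β₁ := by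
    by_contra hc
    push_neg at hc
    nlinarith [sq_nonneg (β₁ - 0.1226), mul_nonneg (sub_nonneg.2 hc) (sq_nonneg (β₁ - 0.1226)),
      sq_nonneg β₁]
  have hb2 : β₁ < 1.7549 := by
    by_contra hc
    push_neg at hc
    nlinarith [mul_nonneg (sub_nonneg.2 hc) (sq_nonneg (β₁ - 0.1226)), sq_nonneg β₁]
  have hβ : β₁ ≠ 0 := by nlinarith
  set u0 : ℝ := 1/β₁^2 with hu0def
  set u1 : ℝ := β₁ - 1 - 1/β₁^2 with hu1def
  have hu0 : u0 * β₁^2 = 1 := by rw [hu0def]; field_simp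
  have hu1 : u1 = β₁ - 1 - u0 := by rw [hu1def, hu0def]
  have h2' : u0*(β₁-1) = 2-β₁ := by
    rw [hu0def]; field_simp; linear_combination hroot
  have h3' : u1*(β₁-1) = u0 := by
    rw [hu1def, hu0def]; field_simp; linear_combination β₁ * hroot
  have hs : u0 + u1 = β₁ - 1 := by rw [hu0def, hu1def]; ring
  set X : ℕ → ℝ := fun N => (cnt p 0 N : ℝ) - u0*N with hXdef
  set Y : ℕ → ℝ := fun N => (cnt p 1 N : ℝ) - u1*N with hYdef
  -- exact step relations
  have hstepX : ∀ n, X (LL p n) = -(Y n) - u0*(X n + Y n) := by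
    intro n
    have e0 : (cnt p 0 (LL p n) : ℝ) = (cnt p 0 n : ℝ) + (cnt p 2 n : ℝ) := by
      exact_mod_cast congrArg (Nat.cast : ℕ → ℝ) (cnt_LL0 p hp n)
    have eL : (LL p n : ℝ) = (n : ℝ) + (cnt p 0 n : ℝ) + (cnt p 1 n : ℝ) := by
      exact_mod_cast congrArg (Nat.cast : ℕ → ℝ) (LL_eq p hp n)
    have esum : (cnt p 0 n : ℝ) + (cnt p 1 n : ℝ) + (cnt p 2 n : ℝ) = (n : ℝ) := by
      exact_mod_cast congrArg (Nat.cast : ℕ → ℝ) (cnt_sum p hp n)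
    simp only [hXdef, hYdef]
    rw [e0, eL]
    exact algebra1 β₁ u0 u1 _ _ _ _ h2' hs esum
  have hstepY : ∀ n, Y (LL p n) = (1-u1)*(X n + Y n) := by
    intro n
    have e1' : (cnt p 1 (LL p n) : ℝ) = (cnt p 0 n : ℝ) + (cnt p 1 n : ℝ) := by
      exact_mod_cast congrArg (Nat.cast : ℕ → ℝ) (cnt_LL1 p hp n)
    have eL : (LL p n : ℝ) = (n : ℝ) + (cnt p 0 n : ℝ) + (cnt p 1 n : ℝ) := by
      exact_mod_cast congrArg (Nat.cast : ℕ → ℝ) (LL_eq p hp n)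
    simp only [hXdef, hYdef]
    rw [e1', eL]
    exact algebra2 β₁ u0 u1 _ _ _ h3' hs
  -- u0, u1 basic bounds
  have hu0pos : 0 < u0 := by
    rw [hu0def]; positivity
  have hu0b : u0 ≤ 0.3248 := by nlinarith
  have hu1a : 0.43 ≤ u1 := by rw [hu1]; nlinarith
  have hu1b : u1 ≤ 0.4302 := by rw [hu1]; nlinarith
  -- one-step increments
  have hdiffX : ∀ N, |X (N+1) - X N| ≤ 1 := by
    intro N
    have : X (N+1) - X N = ((if p N = 0 then (1:ℝ) else 0) - u0) := by
      simp only [hXdef]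
      rw [cnt_succ p 0 N]
      push_cast
      split <;> ring
    rw [this, abs_le]
    split <;> constructor <;> nlinarith
  have hdiffY : ∀ N, |Y (N+1) - Y N| ≤ 1 := by
    intro N
    have : Y (N+1) - Y N = ((if p N = 1 then (1:ℝ) else 0) - u1) := by
      simp only [hYdef]
      rw [cnt_succ p 1 N]
      push_cast
      split <;> ring
    rw [this, abs_le]
    split <;> constructor <;> nlinarith
  -- step with error
  have hstep : ∀ n N, (N = LL p n ∨ N = LL p n + 1) →
      ∃ e f, |e| ≤ 1 ∧ |f| ≤ 1 ∧
        X N = -(Y n) - u0*(X n + Y n) + e ∧ Y N = (1-u1)*(X n + Y n) + f := by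
    intro n N hcase
    rcases hcase with rfl | rfl
    · exact ⟨0, 0, by norm_num, by norm_num, by rw [hstepX n]; ring, by rw [hstepY n]; ring⟩
    · refine ⟨X (LL p n + 1) - X (LL p n), Y (LL p n + 1) - Y (LL p n),
        hdiffX _, hdiffY _, ?_, ?_⟩
      · rw [← hstepX n]; ring
      · rw [← hstepY n]; ring
  -- the global bound
  have hB : ∀ N, |X N| ≤ 200 ∧ |Y N| ≤ 200 := by
    intro N
    induction N using Nat.strong_induction_on with
    | _ N ih =>
      rcases le_or_gt N 3 with hN3 | hN3
      · have hc0 : (cnt p 0 N : ℝ) ≤ (N:ℝ) := by exact_mod_cast cnt_le p 0 N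
        have hc0' : (0:ℝ) ≤ (cnt p 0 N : ℝ) := by positivity
        have hc1 : (cnt p 1 N : ℝ) ≤ (N:ℝ) := by exact_mod_cast cnt_le p 1 N
        have hc1' : (0:ℝ) ≤ (cnt p 1 N : ℝ) := by positivity
        have hNr : (N:ℝ) ≤ 3 := by exact_mod_cast hN3
        have hNr' : (0:ℝ) ≤ (N:ℝ) := by positivity
        constructor
        · simp only [hXdef]; rw [abs_le]; constructor <;> nlinarith
        · simp only [hYdef]; rw [abs_le]; constructor <;> nlinarith
      · obtain ⟨n, hn1, hnN, hcase⟩ := exists_wit p hp N (by omega)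
        have hn2 : 2 ≤ n := by
          by_contra hcon
          have : n = 1 := by omega
          subst this
          rw [LL_one p hp] at hcase
          omega
        obtain ⟨n', hn'1, hn'n, hcase'⟩ := exists_wit p hp n hn2
        obtain ⟨ihX, ihY⟩ := ih n' (by omega)
        obtain ⟨e1, f1, he1, hf1, hXe1, hYe1⟩ := hstep n' n hcase'
        obtain ⟨e2, f2, he2, hf2, hXe2, hYe2⟩ := hstep n N hcase
        exact key β₁ u0 u1 (X n') (Y n') (X n) (Y n) (X N) (Y N) e1 f1 e2 f2
          hb1 hb2 hu0 hu1 hXe1 hYe1 hXe2 hYe2 he1 hf1 he2 hf2 ihX ihY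
  -- conclusion
  have hconv : Filter.Tendsto (fun N : ℕ => (cnt p 0 N : ℝ)/N - u0)
      Filter.atTop (nhds 0) := by
    have hle : ∀ᶠ N : ℕ in Filter.atTop, ‖(cnt p 0 N : ℝ)/N - u0‖ ≤ 200/(N:ℝ) := by
      filter_upwards [Filter.eventually_ge_atTop 1] with N hN
      have hNpos : (0:ℝ) < (N:ℝ) := by exact_mod_cast hN
      have hXN := (hB N).1
      have heq : (cnt p 0 N : ℝ)/N - u0 = X N / N := by
        simp only [hXdef]
        field_simp
      rw [heq]
      rw [Real.norm_eq_abs, abs_div, abs_of_pos hNpos]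
      exact (div_le_div_iff_of_pos_right hNpos).2 hXN
    exact squeeze_zero_norm' hle (tendsto_const_div_atTop_nhds_zero_nat 200)
  have : Filter.Tendsto (fun N : ℕ => (cnt p 0 N : ℝ)/N) Filter.atTop (nhds u0) := by
    have := hconv.add_const u0
    simpa using this
  simpa [cnt, hu0def] using this
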